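/- Let D ⊂ ℝ^d be a compact set with finite positive Lebesgue measure |D|, J = [0,T] with T > 0, (Ω, ℱ, ℙ) a probability space, and 1 ≤ p < ∞. Let w : Ω → L²(D×D), f : Ω → BC¹(ℝ), g : Ω → C⁰(J, L²(D)), and v : Ω → L²(D) be strongly ℙ-measurable with ∫_Ω ‖w(ω)‖^p dℙ < ∞, ∫_Ω (sup_{s∈ℝ}|f(ω)(s)|)^p dℙ < ∞, ∫_Ω ‖g(ω)‖_{C⁰}^p dℙ < ∞, ∫_Ω ‖v(ω)‖₂^p dℙ < ∞, and assume w, f, g, v are mutually independent. Let u : Ω → C¹(J, L²(D)) be strongly ℙ-measurable such that ℙ-a.s. u(ω)(0) = v(ω) and u(ω)'(t) = −u(ω)(t) + H(w(ω))(f(ω)∘u(ω)(t)) + g(ω)(t) for all t ∈ J. Then ∫_Ω ‖u(ω)‖_{C¹(J,L²(D))}^p dℙ(ω) < ∞. -/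

import Mathlib

open MeasureTheory Set
open scoped ENNReal NNReal


lemma aux_two_rpow {p : ℝ} (hp : 0 ≤ p) (x y : ℝ≥0∞) :
    (x + y) ^ p ≤ (2:ℝ≥0∞) ^ p * (x ^ p + y ^ p) := by
  have h1 : x + y ≤ 2 * max x y := by
    rw [two_mul]
    exact add_le_add (le_max_left x y) (le_max_right x y)
  calc (x + y) ^ p ≤ (2 * max x y) ^ p := ENNReal.rpow_le_rpow h1 hp
    _ = (2:ℝ≥0∞) ^ p * (max x y) ^ p := ENNReal.mul_rpow_of_nonneg _ _ hp
    _ ≤ (2:ℝ≥0∞) ^ p * (x ^ p + y ^ p) := by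
        gcongr
        rcases le_total x y with h | h
        · rw [max_eq_right h]; exact le_add_self
        · rw [max_eq_left h]; exact le_self_add

lemma aux_three_rpow {p : ℝ} (hp : 0 ≤ p) (x y z : ℝ≥0∞) :
    (x + y + z) ^ p ≤ (4:ℝ≥0∞) ^ p * (x ^ p + y ^ p + z ^ p) := by
  have h1 : (1:ℝ≥0∞) ≤ (2:ℝ≥0∞) ^ p := by
    rw [← ENNReal.one_rpow p]
    exact ENNReal.rpow_le_rpow one_le_two hp
  have h4 : ((4:ℝ≥0∞)) ^ p = (2:ℝ≥0∞) ^ p * (2:ℝ≥0∞) ^ p := by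
    rw [← ENNReal.mul_rpow_of_nonneg _ _ hp]; norm_num
  calc (x + y + z) ^ p ≤ (2:ℝ≥0∞) ^ p * ((x + y) ^ p + z ^ p) := aux_two_rpow hp _ _
    _ ≤ (2:ℝ≥0∞) ^ p * ((2:ℝ≥0∞) ^ p * (x ^ p + y ^ p) + (2:ℝ≥0∞)^p * z ^ p) := by
        gcongr
        · exact aux_two_rpow hp _ _
        · exact le_mul_of_one_le_left zero_le h1
    _ = (4:ℝ≥0∞) ^ p * (x ^ p + y ^ p + z ^ p) := by rw [h4, ← mul_add, ← mul_assoc, mul_add]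

lemma aux_eLpNorm_two {β : Type*} [MeasurableSpace β] (ν : Measure β) (h : β → ℝ) :
    eLpNorm h 2 ν = (∫⁻ x, (‖h x‖₊ : ℝ≥0∞) ^ (2:ℝ) ∂ν) ^ (1/2 : ℝ) := by
  rw [eLpNorm_eq_lintegral_rpow_enorm_toReal two_ne_zero ENNReal.ofNat_ne_top]
  norm_num [enorm_eq_nnnorm]

lemma aux_kernel_bound {α : Type*} [MeasurableSpace α] {μ : Measure α} [SigmaFinite μ]
    (k : Lp ℝ 2 (μ.prod μ)) (z F : Lp ℝ 2 μ)
    (hF : (F : α → ℝ) =ᵐ[μ] fun x => ∫ x', k (x, x') * z x' ∂μ) :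
    ‖F‖ ≤ ‖k‖ * ‖z‖ := by
  have hk2 : eLpNorm (k : α × α → ℝ) 2 (μ.prod μ) ≠ ⊤ := Lp.eLpNorm_ne_top k
  have hz2 : eLpNorm (z : α → ℝ) 2 μ ≠ ⊤ := Lp.eLpNorm_ne_top z
  have hkm : AEMeasurable (fun q : α × α => ((‖k q‖₊ : ℝ≥0∞)) ^ (2:ℝ)) (μ.prod μ) :=
    (ENNReal.continuous_rpow_const.measurable).comp_aemeasurable
      (Lp.aestronglyMeasurable k).enorm
  have hslice : ∀ᵐ x ∂μ, AEMeasurable (fun x' => ((‖k (x, x')‖₊ : ℝ≥0∞))) μ :=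
    ((Lp.aestronglyMeasurable k).prodMk_left).mono fun x hx => hx.enorm
  set Z2 : ℝ≥0∞ := (∫⁻ x', (‖(z : α → ℝ) x'‖₊ : ℝ≥0∞) ^ (2:ℝ) ∂μ) ^ (1/2 : ℝ) with hZ2
  have hZ2' : Z2 = eLpNorm (z : α → ℝ) 2 μ := by rw [hZ2]; exact (aux_eLpNorm_two μ _).symm
  have key : ∀ᵐ x ∂μ,
      (‖∫ x', k (x, x') * z x' ∂μ‖₊ : ℝ≥0∞) ≤
        ((∫⁻ x', (‖k (x, x')‖₊ : ℝ≥0∞) ^ (2:ℝ) ∂μ) ^ (1/2 : ℝ)) * Z2 := by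
    filter_upwards [hslice] with x hx
    calc (‖∫ x', k (x, x') * z x' ∂μ‖₊ : ℝ≥0∞)
        ≤ ∫⁻ x', ‖k (x, x') * z x'‖₊ ∂μ := enorm_integral_le_lintegral_enorm _
      _ = ∫⁻ x', (‖k (x, x')‖₊ : ℝ≥0∞) * (‖(z : α → ℝ) x'‖₊ : ℝ≥0∞) ∂μ := by
          simp_rw [nnnorm_mul, ENNReal.coe_mul]
      _ ≤ _ := ENNReal.lintegral_mul_le_Lp_mul_Lq μ
          (Real.HolderConjugate.two_two : Real.HolderConjugate 2 2) hx
          (Lp.aestronglyMeasurable z).enorm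
  have main : eLpNorm (fun x => ∫ x', k (x, x') * z x' ∂μ) 2 μ ≤
      eLpNorm (k : α × α → ℝ) 2 (μ.prod μ) * eLpNorm (z : α → ℝ) 2 μ := by
    rw [aux_eLpNorm_two μ _, aux_eLpNorm_two (μ.prod μ) _, ← hZ2']
    have step : (∫⁻ x, (‖∫ x', k (x, x') * z x' ∂μ‖₊ : ℝ≥0∞) ^ (2:ℝ) ∂μ) ≤
        (∫⁻ q, (‖(k : α × α → ℝ) q‖₊ : ℝ≥0∞) ^ (2:ℝ) ∂(μ.prod μ)) * Z2 ^ (2:ℝ) := by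
      calc (∫⁻ x, (‖∫ x', k (x, x') * z x' ∂μ‖₊ : ℝ≥0∞) ^ (2:ℝ) ∂μ)
          ≤ ∫⁻ x, (∫⁻ x', (‖k (x, x')‖₊ : ℝ≥0∞) ^ (2:ℝ) ∂μ) * Z2 ^ (2:ℝ) ∂μ := by
            refine lintegral_mono_ae (key.mono fun x hx => ?_)
            calc (‖∫ x', k (x, x') * z x' ∂μ‖₊ : ℝ≥0∞) ^ (2:ℝ)
                ≤ (((∫⁻ x', (‖k (x, x')‖₊ : ℝ≥0∞) ^ (2:ℝ) ∂μ) ^ (1/2 : ℝ)) * Z2) ^ (2:ℝ) :=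
                  ENNReal.rpow_le_rpow hx (by norm_num)
              _ = (∫⁻ x', (‖k (x, x')‖₊ : ℝ≥0∞) ^ (2:ℝ) ∂μ) * Z2 ^ (2:ℝ) := by
                  rw [ENNReal.mul_rpow_of_nonneg _ _ (by norm_num : (0:ℝ) ≤ 2),
                    ← ENNReal.rpow_mul]
                  norm_num
        _ = (∫⁻ x, ∫⁻ x', (‖k (x, x')‖₊ : ℝ≥0∞) ^ (2:ℝ) ∂μ ∂μ) * Z2 ^ (2:ℝ) :=
            lintegral_mul_const' _ _ (by
              rw [hZ2']
              exact ENNReal.rpow_ne_top_of_nonneg (by norm_num) hz2)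
        _ = (∫⁻ q, (‖(k : α × α → ℝ) q‖₊ : ℝ≥0∞) ^ (2:ℝ) ∂(μ.prod μ)) * Z2 ^ (2:ℝ) := by
            rw [lintegral_prod _ hkm]
    calc (∫⁻ x, (‖∫ x', k (x, x') * z x' ∂μ‖₊ : ℝ≥0∞) ^ (2:ℝ) ∂μ) ^ (1/2 : ℝ)
        ≤ ((∫⁻ q, (‖(k : α × α → ℝ) q‖₊ : ℝ≥0∞) ^ (2:ℝ) ∂(μ.prod μ)) * Z2 ^ (2:ℝ)) ^ (1/2:ℝ) :=
          ENNReal.rpow_le_rpow step (by norm_num)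
      _ = (∫⁻ q, (‖(k : α × α → ℝ) q‖₊ : ℝ≥0∞) ^ (2:ℝ) ∂(μ.prod μ)) ^ (1/2:ℝ) * Z2 := by
          rw [ENNReal.mul_rpow_of_nonneg _ _ (by norm_num : (0:ℝ) ≤ 1/2), ← ENNReal.rpow_mul]
          norm_num
  rw [Lp.norm_def, Lp.norm_def, Lp.norm_def, eLpNorm_congr_ae hF]
  calc (eLpNorm (fun x => ∫ x', k (x, x') * z x' ∂μ) 2 μ).toReal
      ≤ (eLpNorm (k : α × α → ℝ) 2 (μ.prod μ) * eLpNorm (z : α → ℝ) 2 μ).toReal :=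
        ENNReal.toReal_mono (ENNReal.mul_ne_top hk2 hz2) main
    _ = _ := ENNReal.toReal_mul

/-- `BC¹(ℝ)` encoded as pairs (function, derivative) of bounded continuous functions. -/
def BC1 : Type :=
  {p : BoundedContinuousFunction ℝ ℝ × BoundedContinuousFunction ℝ ℝ //
    ∀ s : ℝ, HasDerivAt (p.1 : ℝ → ℝ) (p.2 s) s}

noncomputable instance : TopologicalSpace BC1 := by unfold BC1; infer_instance

set_option maxHeartbeats 1000000 in
/-- `Lᵖ`-regularity for the nonlinear neural field with random data: if
the mutually independent strongly measurable data `w, f, g, v` are `p`-integrable and `u`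
is a strongly measurable `C¹(J,L²(D))`-valued solution (encoded as the pair
(value, derivative) `u, du`), then `∫ ‖u‖_{C¹}^p dℙ < ∞`. -/
theorem stmt15 (d : ℕ) (D : Set (EuclideanSpace ℝ (Fin d)))
    (hD : IsCompact D) (hpos : 0 < volume D) (hfin : volume D < ⊤)
    (T : ℝ) (hT : 0 < T)
    (Ω : Type*) [MeasurableSpace Ω] (ℙ : Measure Ω) [IsProbabilityMeasure ℙ]
    (p : ℝ) (hp : 1 ≤ p)
    (HH : Lp ℝ 2 ((volume.restrict D).prod (volume.restrict D)) →
      (Lp ℝ 2 (volume.restrict D) →L[ℝ] Lp ℝ 2 (volume.restrict D)))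
    (hHH : ∀ kk (z : Lp ℝ 2 (volume.restrict D)),
      (HH kk z : _ → ℝ) =ᵐ[volume.restrict D]
        fun x => ∫ x', kk (x, x') * z x' ∂(volume.restrict D))
    (Nem : BC1 → Lp ℝ 2 (volume.restrict D) → Lp ℝ 2 (volume.restrict D))
    (hNem : ∀ (φ : BC1) (z : Lp ℝ 2 (volume.restrict D)),
      (Nem φ z : _ → ℝ) =ᵐ[volume.restrict D] fun x => (φ.val.1 : ℝ → ℝ) (z x))
    -- strongly measurable, p-integrable random data
    (w : Ω → Lp ℝ 2 ((volume.restrict D).prod (volume.restrict D)))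
    (hw : AEStronglyMeasurable w ℙ)
    (hwp : ∫⁻ ω, (‖w ω‖₊ : ℝ≥0∞) ^ p ∂ℙ < ⊤)
    (f : Ω → BC1) (hf : AEStronglyMeasurable f ℙ)
    (hfp : ∫⁻ ω, (‖(f ω).val.1‖₊ : ℝ≥0∞) ^ p ∂ℙ < ⊤)
    (g : Ω → C(Set.Icc (0:ℝ) T, Lp ℝ 2 (volume.restrict D)))
    (hg : AEStronglyMeasurable g ℙ)
    (hgp : ∫⁻ ω, (‖g ω‖₊ : ℝ≥0∞) ^ p ∂ℙ < ⊤)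
    (v : Ω → Lp ℝ 2 (volume.restrict D)) (hv : AEStronglyMeasurable v ℙ)
    (hvp : ∫⁻ ω, (‖v ω‖₊ : ℝ≥0∞) ^ p ∂ℙ < ⊤)
    -- mutual independence of (w, f, g, v)
    (hindep : ∀ (Bw : Set (Lp ℝ 2 ((volume.restrict D).prod (volume.restrict D))))
      (Bf : Set BC1)
      (Bg : Set (C(Set.Icc (0:ℝ) T, Lp ℝ 2 (volume.restrict D))))
      (Bv : Set (Lp ℝ 2 (volume.restrict D))),
      MeasurableSet[borel _] Bw → MeasurableSet[borel _] Bf →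
      MeasurableSet[borel _] Bg → MeasurableSet[borel _] Bv →
      ℙ (w ⁻¹' Bw ∩ f ⁻¹' Bf ∩ g ⁻¹' Bg ∩ v ⁻¹' Bv) =
        ℙ (w ⁻¹' Bw) * ℙ (f ⁻¹' Bf) * ℙ (g ⁻¹' Bg) * ℙ (v ⁻¹' Bv))
    -- a strongly measurable C¹-valued solution (value u, derivative du)
    (u du : Ω → C(Set.Icc (0:ℝ) T, Lp ℝ 2 (volume.restrict D)))
    (humeas : AEStronglyMeasurable (fun ω => (u ω, du ω)) ℙ)
    (husol : ∀ᵐ ω ∂ℙ,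
      u ω (Set.projIcc 0 T hT.le 0) = v ω ∧
      ∀ t ∈ Set.Icc (0:ℝ) T,
        HasDerivWithinAt (fun s : ℝ => u ω (Set.projIcc 0 T hT.le s))
          (du ω (Set.projIcc 0 T hT.le t)) (Set.Icc (0:ℝ) T) t ∧
        du ω (Set.projIcc 0 T hT.le t) =
          -(u ω (Set.projIcc 0 T hT.le t)) +
            HH (w ω) (Nem (f ω) (u ω (Set.projIcc 0 T hT.le t))) +
            g ω (Set.projIcc 0 T hT.le t)) :
    ∫⁻ ω, ((‖u ω‖₊ : ℝ≥0∞) + (‖du ω‖₊ : ℝ≥0∞)) ^ p ∂ℙ < ⊤ := by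
  have hp0 : (0:ℝ) ≤ p := le_trans zero_le_one hp
  -- the constant from the Nemytskii bound
  set SD : ℝ≥0∞ := (volume.restrict D) Set.univ ^ ((2:ℝ≥0∞).toReal⁻¹) with hSD
  have hSDfin : SD ≠ ⊤ := by
    rw [hSD]
    refine ENNReal.rpow_ne_top_of_nonneg (by norm_num) ?_
    simpa [Measure.restrict_apply_univ] using hfin.ne
  set sR : ℝ := SD.toReal with hsR
  have hsR0 : 0 ≤ sR := ENNReal.toReal_nonneg
  -- Nemytskii bound
  have hNemB : ∀ (φ : BC1) (z : Lp ℝ 2 (volume.restrict D)),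
      ‖Nem φ z‖ ≤ sR * ‖φ.val.1‖ := by
    intro φ z
    have h1 : ∀ᵐ x ∂(volume.restrict D), ‖(Nem φ z : _ → ℝ) x‖ ≤ ‖φ.val.1‖ :=
      (hNem φ z).mono fun x hx => by
        rw [hx]; exact BoundedContinuousFunction.norm_coe_le_norm _ _
    have h2 := eLpNorm_le_of_ae_bound (p := 2) h1
    rw [Lp.norm_def]
    calc (eLpNorm (Nem φ z : _ → ℝ) 2 (volume.restrict D)).toReal
        ≤ (SD * ENNReal.ofReal ‖φ.val.1‖).toReal :=
          ENNReal.toReal_mono (ENNReal.mul_ne_top hSDfin ENNReal.ofReal_ne_top) h2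
      _ = sR * ‖φ.val.1‖ := by
          rw [ENNReal.toReal_mul, ENNReal.toReal_ofReal (norm_nonneg _)]
  -- the global constant
  set C : ℝ := (2 * Real.exp T + 1) * (1 + sR) with hC
  have heT : (1:ℝ) ≤ Real.exp T := Real.one_le_exp hT.le
  have hC0 : 0 ≤ C := by positivity
  -- pointwise (a.e.) bound
  have hptwise : ∀ᵐ ω ∂ℙ,
      ((‖u ω‖₊ : ℝ≥0∞) + (‖du ω‖₊ : ℝ≥0∞)) ^ p ≤
        (ENNReal.ofReal C) ^ p * ((4:ℝ≥0∞) ^ p *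
          (((‖v ω‖₊ : ℝ≥0∞)) ^ p + ((‖w ω‖₊ : ℝ≥0∞) * (‖(f ω).val.1‖₊ : ℝ≥0∞)) ^ p +
            ((‖g ω‖₊ : ℝ≥0∞)) ^ p)) := by
    filter_upwards [husol] with ω hω
    obtain ⟨h0, hsol⟩ := hω
    set Kc : ℝ := ‖w ω‖ * (sR * ‖(f ω).val.1‖) + ‖g ω‖ with hKc
    have hKc0 : 0 ≤ Kc := by positivity
    -- derivative bound
    have hdb : ∀ t ∈ Set.Icc (0:ℝ) T,
        ‖du ω (Set.projIcc 0 T hT.le t)‖ ≤ 1 * ‖u ω (Set.projIcc 0 T hT.le t)‖ + Kc := by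
      intro t ht
      obtain ⟨-, heq⟩ := hsol t ht
      rw [heq, one_mul]
      have hA : ‖HH (w ω) (Nem (f ω) (u ω (Set.projIcc 0 T hT.le t)))‖ ≤
          ‖w ω‖ * (sR * ‖(f ω).val.1‖) := by
        calc ‖HH (w ω) (Nem (f ω) (u ω (Set.projIcc 0 T hT.le t)))‖
            ≤ ‖w ω‖ * ‖Nem (f ω) (u ω (Set.projIcc 0 T hT.le t))‖ :=
              aux_kernel_bound (w ω) _ _ (hHH (w ω) _)
          _ ≤ ‖w ω‖ * (sR * ‖(f ω).val.1‖) := by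
              have := hNemB (f ω) (u ω (Set.projIcc 0 T hT.le t))
              exact mul_le_mul_of_nonneg_left this (norm_nonneg _)
      have hg' : ‖g ω (Set.projIcc 0 T hT.le t)‖ ≤ ‖g ω‖ :=
        ContinuousMap.norm_coe_le_norm _ _
      calc ‖-(u ω (Set.projIcc 0 T hT.le t)) +
            HH (w ω) (Nem (f ω) (u ω (Set.projIcc 0 T hT.le t))) +
            g ω (Set.projIcc 0 T hT.le t)‖
          ≤ ‖-(u ω (Set.projIcc 0 T hT.le t)) +
            HH (w ω) (Nem (f ω) (u ω (Set.projIcc 0 T hT.le t)))‖ +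
            ‖g ω (Set.projIcc 0 T hT.le t)‖ := norm_add_le _ _
        _ ≤ (‖u ω (Set.projIcc 0 T hT.le t)‖ +
            ‖HH (w ω) (Nem (f ω) (u ω (Set.projIcc 0 T hT.le t)))‖) +
            ‖g ω (Set.projIcc 0 T hT.le t)‖ := by
            gcongr
            exact (norm_add_le _ _).trans (by rw [norm_neg])
        _ ≤ ‖u ω (Set.projIcc 0 T hT.le t)‖ + Kc := by
            rw [hKc]; push_cast; linarith
    -- Gronwall
    have hgron := norm_le_gronwallBound_of_norm_deriv_right_le
      (f := fun s : ℝ => u ω (Set.projIcc 0 T hT.le s))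
      (f' := fun s : ℝ => du ω (Set.projIcc 0 T hT.le s))
      (δ := ‖v ω‖) (K := 1) (ε := Kc) (a := 0) (b := T)
      (((u ω).continuous.comp continuous_projIcc).continuousOn)
      (fun x hx => ((hsol x ⟨hx.1, hx.2.le⟩).1).mono_of_mem_nhdsWithin (Icc_mem_nhdsGE_of_mem hx))
      (by show ‖u ω (Set.projIcc 0 T hT.le 0)‖ ≤ ‖v ω‖; rw [h0])
      (fun x hx => hdb x ⟨hx.1, hx.2.le⟩)
    set B : ℝ := (‖v ω‖ + Kc) * Real.exp T with hB
    have hB0 : 0 ≤ B := by positivity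
    have hgB : ∀ x ∈ Set.Icc (0:ℝ) T, gronwallBound (‖v ω‖) 1 Kc (x - 0) ≤ B := by
      intro x hx
      rw [gronwallBound_of_K_ne_0 one_ne_zero]
      have h1 : Real.exp (1 * (x - 0)) ≤ Real.exp T := by
        rw [one_mul, sub_zero]; exact Real.exp_le_exp.mpr hx.2
      have h2 : 0 < Real.exp (1 * (x - 0)) := Real.exp_pos _
      have h3 : 0 ≤ ‖v ω‖ := norm_nonneg _
      rw [hB]
      nlinarith [mul_le_mul_of_nonneg_left h1 h3, mul_le_mul_of_nonneg_left h1 hKc0]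
    have hub : ∀ x : Set.Icc (0:ℝ) T, ‖u ω x‖ ≤ B := by
      intro x
      have h1 := hgron x x.2
      simp only [Set.projIcc_val] at h1
      exact h1.trans (hgB x x.2)
    have hu1 : ‖u ω‖ ≤ B := (ContinuousMap.norm_le _ hB0).mpr hub
    have hdu1 : ‖du ω‖ ≤ B + Kc := by
      refine (ContinuousMap.norm_le _ (by linarith)).mpr fun x => ?_
      have h1 := hdb x x.2
      simp only [Set.projIcc_val, one_mul] at h1
      exact h1.trans (by have := hub x; linarith)
    -- total real bound
    have htot : ‖u ω‖ + ‖du ω‖ ≤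
        C * (‖v ω‖ + ‖w ω‖ * ‖(f ω).val.1‖ + ‖g ω‖) := by
      have hm0 : 0 ≤ ‖w ω‖ * ‖(f ω).val.1‖ := by positivity
      have hg0 : 0 ≤ ‖g ω‖ := norm_nonneg _
      have hv0 : 0 ≤ ‖v ω‖ := norm_nonneg _
      have hKle : Kc ≤ (1 + sR) * (‖w ω‖ * ‖(f ω).val.1‖ + ‖g ω‖) := by
        rw [hKc]; nlinarith
      have h2B : 2 * B + Kc ≤ (2 * Real.exp T + 1) * (‖v ω‖ + Kc) := by
        rw [hB]; nlinarith
      have hKc2 : ‖v ω‖ + Kc ≤ (1 + sR) * (‖v ω‖ + ‖w ω‖ * ‖(f ω).val.1‖ + ‖g ω‖) := by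
        nlinarith
      have : (2 * Real.exp T + 1) * (‖v ω‖ + Kc) ≤
          C * (‖v ω‖ + ‖w ω‖ * ‖(f ω).val.1‖ + ‖g ω‖) := by
        rw [hC, mul_assoc]
        have h5 : (0:ℝ) ≤ 2 * Real.exp T + 1 := by positivity
        exact mul_le_mul_of_nonneg_left hKc2 h5
      linarith
    -- move to ℝ≥0∞
    have hbase : ((‖u ω‖₊ : ℝ≥0∞) + (‖du ω‖₊ : ℝ≥0∞)) ≤
        ENNReal.ofReal C * ((‖v ω‖₊ : ℝ≥0∞) +
          (‖w ω‖₊ : ℝ≥0∞) * (‖(f ω).val.1‖₊ : ℝ≥0∞) + (‖g ω‖₊ : ℝ≥0∞)) := by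
      have h1 : ((‖u ω‖₊ : ℝ≥0∞) + (‖du ω‖₊ : ℝ≥0∞)) = ENNReal.ofReal (‖u ω‖ + ‖du ω‖) := by
        rw [ENNReal.ofReal_add (norm_nonneg _) (norm_nonneg _),
          ofReal_norm, enorm_eq_nnnorm, ofReal_norm, enorm_eq_nnnorm]
      rw [h1]
      calc ENNReal.ofReal (‖u ω‖ + ‖du ω‖)
          ≤ ENNReal.ofReal (C * (‖v ω‖ + ‖w ω‖ * ‖(f ω).val.1‖ + ‖g ω‖)) :=
            ENNReal.ofReal_le_ofReal htot
        _ = _ := by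
            rw [ENNReal.ofReal_mul hC0,
              ENNReal.ofReal_add (by positivity) (norm_nonneg _),
              ENNReal.ofReal_add (norm_nonneg _) (by positivity),
              ENNReal.ofReal_mul (norm_nonneg _),
              ofReal_norm, enorm_eq_nnnorm, ofReal_norm, enorm_eq_nnnorm,
              ofReal_norm, enorm_eq_nnnorm, ofReal_norm, enorm_eq_nnnorm]
    calc ((‖u ω‖₊ : ℝ≥0∞) + (‖du ω‖₊ : ℝ≥0∞)) ^ p
        ≤ (ENNReal.ofReal C * ((‖v ω‖₊ : ℝ≥0∞) +
          (‖w ω‖₊ : ℝ≥0∞) * (‖(f ω).val.1‖₊ : ℝ≥0∞) + (‖g ω‖₊ : ℝ≥0∞))) ^ p :=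
          ENNReal.rpow_le_rpow hbase hp0
      _ = (ENNReal.ofReal C) ^ p * ((‖v ω‖₊ : ℝ≥0∞) +
          (‖w ω‖₊ : ℝ≥0∞) * (‖(f ω).val.1‖₊ : ℝ≥0∞) + (‖g ω‖₊ : ℝ≥0∞)) ^ p :=
          ENNReal.mul_rpow_of_nonneg _ _ hp0
      _ ≤ _ := by
          gcongr
          exact aux_three_rpow hp0 _ _ _
  -- measurability of data norms
  have hfc : Continuous (fun φ : BC1 => (φ.val.1 : BoundedContinuousFunction ℝ ℝ)) :=
    continuous_fst.comp continuous_subtype_val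
  have hfm : AEStronglyMeasurable (fun ω => (f ω).val.1) ℙ :=
    hfc.comp_aestronglyMeasurable hf
  have hAv : AEMeasurable (fun ω => ((‖v ω‖₊ : ℝ≥0∞)) ^ p) ℙ :=
    (ENNReal.continuous_rpow_const.measurable).comp_aemeasurable hv.enorm
  have hAw : AEMeasurable (fun ω => ((‖w ω‖₊ : ℝ≥0∞)) ^ p) ℙ :=
    (ENNReal.continuous_rpow_const.measurable).comp_aemeasurable hw.enorm
  have hAf : AEMeasurable (fun ω => ((‖(f ω).val.1‖₊ : ℝ≥0∞)) ^ p) ℙ :=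
    (ENNReal.continuous_rpow_const.measurable).comp_aemeasurable hfm.enorm
  have hAg : AEMeasurable (fun ω => ((‖g ω‖₊ : ℝ≥0∞)) ^ p) ℙ :=
    (ENNReal.continuous_rpow_const.measurable).comp_aemeasurable hg.enorm
  have hAb : AEMeasurable
      (fun ω => ((‖w ω‖₊ : ℝ≥0∞) * (‖(f ω).val.1‖₊ : ℝ≥0∞)) ^ p) ℙ :=
    (ENNReal.continuous_rpow_const.measurable).comp_aemeasurable
      (hw.enorm.mul hfm.enorm)
  -- independence of the two factors
  have hIndep : ProbabilityTheory.IndepFun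
      (fun ω => ((‖w ω‖₊ : ℝ≥0∞)) ^ p) (fun ω => ((‖(f ω).val.1‖₊ : ℝ≥0∞)) ^ p) ℙ := by
    rw [ProbabilityTheory.indepFun_iff_measure_inter_preimage_eq_mul]
    intro s t hs ht
    have hBw : MeasurableSet[borel (Lp ℝ 2 ((volume.restrict D).prod (volume.restrict D)))]
        ((fun k : Lp ℝ 2 ((volume.restrict D).prod (volume.restrict D)) =>
          ((‖k‖₊ : ℝ≥0∞)) ^ p) ⁻¹' s) := by
      letI : MeasurableSpace (Lp ℝ 2 ((volume.restrict D).prod (volume.restrict D))) := borel _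
      haveI : BorelSpace (Lp ℝ 2 ((volume.restrict D).prod (volume.restrict D))) := ⟨rfl⟩
      exact (ENNReal.continuous_rpow_const.measurable.comp
        (measurable_coe_nnreal_ennreal.comp continuous_nnnorm.measurable)) hs
    have hBf : MeasurableSet[borel BC1]
        ((fun φ : BC1 => ((‖φ.val.1‖₊ : ℝ≥0∞)) ^ p) ⁻¹' t) := by
      letI : MeasurableSpace BC1 := borel _
      haveI : BorelSpace BC1 := ⟨rfl⟩
      exact (ENNReal.continuous_rpow_const.measurable.comp
        (measurable_coe_nnreal_ennreal.comp (hfc.nnnorm.measurable))) ht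
    have h := hindep _ _ Set.univ Set.univ hBw hBf
      (@MeasurableSet.univ _ (borel _)) (@MeasurableSet.univ _ (borel _))
    simpa [Set.preimage_preimage, measure_univ] using h
  -- product integral
  have hb : ∫⁻ ω, ((‖w ω‖₊ : ℝ≥0∞) * (‖(f ω).val.1‖₊ : ℝ≥0∞)) ^ p ∂ℙ =
      (∫⁻ ω, ((‖w ω‖₊ : ℝ≥0∞)) ^ p ∂ℙ) * ∫⁻ ω, ((‖(f ω).val.1‖₊ : ℝ≥0∞)) ^ p ∂ℙ := by
    have heq : ∀ ω, ((‖w ω‖₊ : ℝ≥0∞) * (‖(f ω).val.1‖₊ : ℝ≥0∞)) ^ p =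
        ((‖w ω‖₊ : ℝ≥0∞)) ^ p * ((‖(f ω).val.1‖₊ : ℝ≥0∞)) ^ p := fun ω =>
      ENNReal.mul_rpow_of_nonneg _ _ hp0
    rw [lintegral_congr heq]
    exact ProbabilityTheory.lintegral_mul_eq_lintegral_mul_lintegral_of_indepFun''
      hAw hAf hIndep
  -- finish
  have hCfin : (ENNReal.ofReal C) ^ p ≠ ⊤ :=
    ENNReal.rpow_ne_top_of_nonneg hp0 ENNReal.ofReal_ne_top
  have h4fin : ((4:ℝ≥0∞)) ^ p ≠ ⊤ := by
    refine ENNReal.rpow_ne_top_of_nonneg hp0 ?_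
    norm_num
  refine lt_of_le_of_lt (lintegral_mono_ae hptwise) ?_
  rw [lintegral_const_mul' _ _ hCfin, lintegral_const_mul' _ _ h4fin,
    lintegral_add_right' _ hAg, lintegral_add_left' hAv, hb]
  refine ENNReal.mul_lt_top hCfin.lt_top (ENNReal.mul_lt_top h4fin.lt_top ?_)
  exact ENNReal.add_lt_top.mpr ⟨ENNReal.add_lt_top.mpr ⟨hvp, ENNReal.mul_lt_top hwp hfp⟩, hgp⟩
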